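/- Let f(x,y) = ((t-1)x - (s-1)y)^2 + 2(t-1)x + 2(s-1)y + 1 where s > 0, t > 0, s + t > 1, s ≠ 1, t ≠ 1. If t > 1, then for any real x > 0 and real y, f(x,y) > 0. -/
import Mathlib

theorem stmt_1 (s t : ℝ) (hs : 0 < s) (ht : 0 < t) (hst : 1 < s + t)
    (hs1 : s ≠ 1) (ht1 : t ≠ 1) (ht' : 1 < t) :
    ∀ x y : ℝ, 0 < x →
      0 < ((t-1)*x - (s-1)*y)^2 + 2*(t-1)*x + 2*(s-1)*y + 1 := by
  intro x y hx
  nlinarith [sq_nonneg ((t-1)*x - (s-1)*y - 1), mul_pos (sub_pos.2 ht') hx]
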